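/- Let R be a commutative ring, S a multiplicative subset of R, and M an R-module. Then M is u-S-quasi-projective if and only if M ⊕ M is u-S-pseudo-projective. -/
import Mathlib


/-!  Definitions for uniformly-S-pseudo-projective modules
(M. Adarbeh, M. Saleh, "Uniformly-S-pseudo-projective modules"). -/

universe u v w

/-- `S` is a multiplicative subset of the commutative ring `R`:
`1 ∈ S`, `0 ∉ S`, and `S` is closed under multiplication. -/
def IsMultSubset {R : Type u} [CommRing R] (S : Set R) : Prop :=
  1 ∈ S ∧ (0 : R) ∉ S ∧ ∀ ⦃a b : R⦄, a ∈ S → b ∈ S → a * b ∈ S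

/-- An `R`-module `T` is `u`-`S`-torsion if some `s ∈ S` annihilates it. -/
def IsUSTorsion {R : Type u} [CommRing R] (S : Set R) (T : Type v) [AddCommGroup T]
    [Module R T] : Prop :=
  ∃ s ∈ S, ∀ t : T, s • t = 0

/-- `f` is a `u`-`S`-monomorphism: its kernel is `u`-`S`-torsion. -/
def IsUSMono {R : Type u} [CommRing R] (S : Set R) {M : Type v} {N : Type w}
    [AddCommGroup M] [Module R M] [AddCommGroup N] [Module R N] (f : M →ₗ[R] N) : Prop :=
  ∃ s ∈ S, ∀ m ∈ LinearMap.ker f, s • m = (0 : M)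

/-- `f` is a `u`-`S`-epimorphism: its cokernel is `u`-`S`-torsion. -/
def IsUSEpi {R : Type u} [CommRing R] (S : Set R) {M : Type v} {N : Type w}
    [AddCommGroup M] [Module R M] [AddCommGroup N] [Module R N] (f : M →ₗ[R] N) : Prop :=
  ∃ s ∈ S, ∀ n : N, s • n ∈ LinearMap.range f

/-- `f` is a `u`-`S`-isomorphism: both a `u`-`S`-monomorphism and a `u`-`S`-epimorphism. -/
def IsUSIso {R : Type u} [CommRing R] (S : Set R) {M : Type v} {N : Type w}
    [AddCommGroup M] [Module R M] [AddCommGroup N] [Module R N] (f : M →ₗ[R] N) : Prop :=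
  IsUSMono S f ∧ IsUSEpi S f

/-- `P` is `u`-`S`-pseudo-projective: for every submodule `K` of `P` there is `s ∈ S` such that
every `u`-`S`-epimorphism `f : P → P/K` satisfies `s • f = π_K ∘ g` for some endomorphism
`g` of `P`. -/
def IsUSPseudoProjective {R : Type u} [CommRing R] (S : Set R) (P : Type v)
    [AddCommGroup P] [Module R P] : Prop :=
  ∀ K : Submodule R P, ∃ s ∈ S, ∀ f : P →ₗ[R] P ⧸ K, IsUSEpi S f →
    ∃ g : P →ₗ[R] P, s • f = K.mkQ.comp g

/-- `M` is `u`-`S`-quasi-projective. -/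
def IsUSQuasiProjective {R : Type u} [CommRing R] (S : Set R) (M : Type v)
    [AddCommGroup M] [Module R M] : Prop :=
  ∀ K : Submodule R M, ∃ s ∈ S, ∀ f : M →ₗ[R] M ⧸ K,
    ∃ g : M →ₗ[R] M, s • f = K.mkQ.comp g

/-- `Q` is `u`-`S`-projective (test modules in `Type v₁`). -/
def IsUSProjective.{u₁, v₁, w₁} {R : Type u₁} [CommRing R] (S : Set R) (Q : Type w₁)
    [AddCommGroup Q] [Module R Q] : Prop :=
  ∀ (B C : Type v₁) [AddCommGroup B] [AddCommGroup C] [Module R B] [Module R C]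
    (g : B →ₗ[R] C), IsUSEpi S g →
      ∃ s ∈ S, ∀ h : Q →ₗ[R] C, ∃ h' : Q →ₗ[R] B, s • h = g.comp h'

/-- `M` is `u`-`S`-injective (test modules in `Type v₁`). -/
def IsUSInjective.{u₁, v₁, w₁} {R : Type u₁} [CommRing R] (S : Set R) (M : Type w₁)
    [AddCommGroup M] [Module R M] : Prop :=
  ∀ (A B : Type v₁) [AddCommGroup A] [AddCommGroup B] [Module R A] [Module R B]
    (f : A →ₗ[R] B), IsUSMono S f →
      ∃ s ∈ S, ∀ h : A →ₗ[R] M, ∃ h' : B →ₗ[R] M, s • h = h'.comp f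

/-- `E` is `u`-`S`-pseudo-injective. -/
def IsUSPseudoInjective {R : Type u} [CommRing R] (S : Set R) (E : Type v)
    [AddCommGroup E] [Module R E] : Prop :=
  ∀ K : Submodule R E, ∃ s ∈ S, ∀ f : ↥K →ₗ[R] E, IsUSMono S f →
    ∃ g : E →ₗ[R] E, g.comp K.subtype = s • f

/-- The sequence `0 → A →f B →g C → 0` is short `u`-`S`-exact. -/
def IsShortUSExact {R : Type u} [CommRing R] (S : Set R) {A B C : Type v}
    [AddCommGroup A] [Module R A] [AddCommGroup B] [Module R B] [AddCommGroup C] [Module R C]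
    (f : A →ₗ[R] B) (g : B →ₗ[R] C) : Prop :=
  IsUSMono S f ∧ IsUSEpi S g ∧
    ∃ s ∈ S, (∀ x ∈ LinearMap.ker g, s • x ∈ LinearMap.range f) ∧
      (∀ x ∈ LinearMap.range f, s • x ∈ LinearMap.ker g)

/-- The short `u`-`S`-exact sequence `0 → A →f B →g C → 0` is `u`-`S`-split:
some multiple `s • 1_A` of the identity factors back through `f`. -/
def IsUSSplitSeq {R : Type u} [CommRing R] (S : Set R) {A B : Type v}
    [AddCommGroup A] [Module R A] [AddCommGroup B] [Module R B] (f : A →ₗ[R] B) : Prop :=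
  ∃ s ∈ S, ∃ f' : B →ₗ[R] A, f'.comp f = s • (LinearMap.id : A →ₗ[R] A)

/-- `M` is a `u`-`S`-semisimple module (test sequences with modules in `Type v₁`). -/
def IsUSSemisimpleModule.{u₁, v₁} {R : Type u₁} [CommRing R] (S : Set R) (M : Type v₁)
    [AddCommGroup M] [Module R M] : Prop :=
  ∀ (A C : Type v₁) [AddCommGroup A] [AddCommGroup C] [Module R A] [Module R C]
    (f : A →ₗ[R] M) (g : M →ₗ[R] C), IsShortUSExact S f g → IsUSSplitSeq S f

/-- `R` is a `u`-`S`-semisimple ring: every free `R`-module is `u`-`S`-semisimple. -/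
def IsUSSemisimpleRing.{u₁, v₁} {R : Type u₁} [CommRing R] (S : Set R) : Prop :=
  ∀ (F : Type v₁) [AddCommGroup F] [Module R F], Module.Free R F →
    IsUSSemisimpleModule.{u₁, v₁} S F

/-- A submodule `N` of `M` is a `u`-`S`-direct summand of `M` if there is an `R`-module `N'`
and a `u`-`S`-isomorphism between `M` and `N ⊕ N'`. -/
def IsUSDirectSummand {R : Type u} [CommRing R] (S : Set R) {M : Type v}
    [AddCommGroup M] [Module R M] (N : Submodule R M) : Prop :=
  ∃ (N' : ModuleCat.{v} R) (h : M →ₗ[R] (↥N × ↥N')), IsUSIso S h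

/-- `A` is `u`-`S`-projective relative to `B`. -/
def IsUSProjectiveRel {R : Type u} [CommRing R] (S : Set R) (A : Type v) (B : Type w)
    [AddCommGroup A] [Module R A] [AddCommGroup B] [Module R B] : Prop :=
  ∀ K : Submodule R B, ∃ s ∈ S, ∀ f : A →ₗ[R] B ⧸ K,
    ∃ h : A →ₗ[R] B, s • f = K.mkQ.comp h

/-- `M` is `u`-`S`-quasi-projective if and only if `M ⊕ M` is `u`-`S`-pseudo-projective. -/
theorem uSQuasiProjective_iff_prod_self_uSPseudoProjective
    {R : Type u} [CommRing R] (S : Set R) (hS : IsMultSubset S)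
    {M : Type v} [AddCommGroup M] [Module R M] :
    IsUSQuasiProjective S M ↔ IsUSPseudoProjective S (M × M) := by
  constructor
  · -- forward: M u-S-quasi-projective ⇒ M × M u-S-pseudo-projective
    intro hqp K
    set K₁ : Submodule R M := K.map (LinearMap.fst R M M) with hK₁
    set K₂ : Submodule R M := K.comap (LinearMap.inr R M M) with hK₂
    obtain ⟨s₁, hs₁, H₁⟩ := hqp K₁
    obtain ⟨s₂, hs₂, H₂⟩ := hqp K₂
    refine ⟨s₁ * s₂, hS.2.2 hs₁ hs₂, ?_⟩
    intro f _hepi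
    -- the two auxiliary maps
    have hp0 : ∀ z ∈ K, (K₁.mkQ ∘ₗ LinearMap.fst R M M) z = 0 := by
      intro z hz
      simp only [LinearMap.comp_apply, LinearMap.fst_apply, Submodule.mkQ_apply,
        Submodule.Quotient.mk_eq_zero]
      exact ⟨z, hz, rfl⟩
    set p : ((M × M) ⧸ K) →ₗ[R] M ⧸ K₁ :=
      Submodule.liftQ K (K₁.mkQ ∘ₗ LinearMap.fst R M M) hp0 with hpdef
    have hj0 : ∀ y ∈ K₂, (K.mkQ ∘ₗ LinearMap.inr R M M) y = 0 := by
      intro y hy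
      simp only [LinearMap.comp_apply, LinearMap.inr_apply, Submodule.mkQ_apply,
        Submodule.Quotient.mk_eq_zero]
      exact hy
    set j : (M ⧸ K₂) →ₗ[R] (M × M) ⧸ K :=
      Submodule.liftQ K₂ (K.mkQ ∘ₗ LinearMap.inr R M M) hj0 with hjdef
    have hjmk : ∀ y : M, j (K₂.mkQ y) = K.mkQ (0, y) := fun y => rfl
    have hpmk : ∀ z : M × M, p (K.mkQ z) = K₁.mkQ z.1 := fun z => rfl
    have hjinj : Function.Injective j := by
      rw [← LinearMap.ker_eq_bot, Submodule.eq_bot_iff]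
      intro c hc
      obtain ⟨y, rfl⟩ := K₂.mkQ_surjective c
      rw [LinearMap.mem_ker, hjmk] at hc
      rw [Submodule.mkQ_apply, Submodule.Quotient.mk_eq_zero] at hc ⊢
      exact hc
    set e := LinearEquiv.ofInjective j hjinj with hedef
    have hje : ∀ z : LinearMap.range j, j (e.symm z) = (z : (M × M) ⧸ K) := by
      intro z
      have h1 : ((e (e.symm z) : LinearMap.range j) : (M × M) ⧸ K) = j (e.symm z) :=
        LinearEquiv.ofInjective_apply j (e.symm z)
      rw [e.apply_symm_apply] at h1
      exact h1.symm
    -- key: every map from one copy of M lifts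
    have key : ∀ f0 : M →ₗ[R] (M × M) ⧸ K, ∃ G : M →ₗ[R] M × M,
        (s₁ * s₂) • f0 = K.mkQ.comp G := by
      intro f0
      obtain ⟨g₁, hg₁⟩ := H₁ (p ∘ₗ f0)
      set h : M →ₗ[R] (M × M) ⧸ K :=
        s₁ • f0 - K.mkQ ∘ₗ LinearMap.inl R M M ∘ₗ g₁ with hhdef
      have hmem : ∀ x : M, h x ∈ LinearMap.range j := by
        intro x
        have hpc : p (h x) = 0 := by
          have hx := LinearMap.congr_fun hg₁ x
          simp only [LinearMap.smul_apply, LinearMap.comp_apply, Submodule.mkQ_apply] at hx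
          simp only [hhdef, LinearMap.sub_apply, LinearMap.smul_apply, LinearMap.comp_apply,
            LinearMap.inl_apply, map_sub, map_smul]
          rw [hpmk]
          simp only [Submodule.mkQ_apply] at hx ⊢
          rw [← hx]
          simp
        obtain ⟨z, hz⟩ := K.mkQ_surjective (h x)
        rw [← hz, hpmk, Submodule.mkQ_apply, Submodule.Quotient.mk_eq_zero] at hpc
        obtain ⟨w, hwK, hw1⟩ := hpc
        refine ⟨K₂.mkQ (z.2 - w.2), ?_⟩
        rw [hjmk, ← hz]
        rw [Submodule.mkQ_apply, Submodule.mkQ_apply, Submodule.Quotient.eq]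
        have hw1' : w.1 = z.1 := hw1
        have : (0, z.2 - w.2) - z = -w := by
          ext
          · simp [hw1']
          · simp
        rw [this]
        exact K.neg_mem hwK
      set f₂ : M →ₗ[R] M ⧸ K₂ :=
        e.symm.toLinearMap ∘ₗ LinearMap.codRestrict (LinearMap.range j) h hmem with hf₂def
      have hjf₂ : ∀ x : M, j (f₂ x) = h x := by
        intro x
        simp only [hf₂def, LinearMap.comp_apply, LinearEquiv.coe_coe]
        exact hje ⟨h x, hmem x⟩
      obtain ⟨g₂, hg₂⟩ := H₂ f₂
      refine ⟨LinearMap.inl R M M ∘ₗ (s₂ • g₁) + LinearMap.inr R M M ∘ₗ g₂, ?_⟩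
      ext x
      have h2 : K.mkQ (0, g₂ x) = s₂ • h x := by
        rw [← hjmk]
        have := LinearMap.congr_fun hg₂ x
        simp only [LinearMap.smul_apply, LinearMap.comp_apply, Submodule.mkQ_apply] at this
        rw [Submodule.mkQ_apply, ← this, map_smul, hjf₂]
      simp only [LinearMap.smul_apply, LinearMap.comp_apply, LinearMap.add_apply,
        LinearMap.inl_apply, LinearMap.inr_apply, map_add]
      rw [h2]
      simp only [hhdef, LinearMap.sub_apply, LinearMap.smul_apply, LinearMap.comp_apply,
        LinearMap.inl_apply]
      rw [show ((s₂ • g₁ x, (0 : M)) : M × M) = s₂ • ((g₁ x, (0 : M)) : M × M) by simp,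
        map_smul, smul_sub, smul_smul, mul_comm s₂ s₁]
      abel
    obtain ⟨Ga, hGa⟩ := key (f ∘ₗ LinearMap.inl R M M)
    obtain ⟨Gb, hGb⟩ := key (f ∘ₗ LinearMap.inr R M M)
    refine ⟨Ga ∘ₗ LinearMap.fst R M M + Gb ∘ₗ LinearMap.snd R M M, ?_⟩
    refine LinearMap.ext fun z => ?_
    have ha := LinearMap.congr_fun hGa z.1
    have hb := LinearMap.congr_fun hGb z.2
    simp only [LinearMap.smul_apply, LinearMap.comp_apply, LinearMap.inl_apply,
      LinearMap.inr_apply, LinearMap.fst_apply, LinearMap.snd_apply,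
      LinearMap.add_apply] at ha hb ⊢
    rw [map_add, ← ha, ← hb, ← smul_add, ← map_add]
    congr 2
    ext <;> simp
  · -- backward: M × M u-S-pseudo-projective ⇒ M u-S-quasi-projective
    intro hpp K
    set K' : Submodule R (M × M) := (⊥ : Submodule R M).prod K with hK'def
    obtain ⟨s, hs, hlift⟩ := hpp K'
    refine ⟨s, hs, ?_⟩
    intro f
    have he0 : ∀ y ∈ K, (K'.mkQ ∘ₗ LinearMap.inr R M M) y = 0 := by
      intro y hy
      simp only [LinearMap.comp_apply, LinearMap.inr_apply, Submodule.mkQ_apply,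
        Submodule.Quotient.mk_eq_zero]
      exact ⟨Submodule.mem_bot R |>.mpr rfl, hy⟩
    set e : (M ⧸ K) →ₗ[R] (M × M) ⧸ K' :=
      Submodule.liftQ K (K'.mkQ ∘ₗ LinearMap.inr R M M) he0 with hedef
    have hr0 : ∀ z ∈ K', (K.mkQ ∘ₗ LinearMap.snd R M M) z = 0 := by
      intro z hz
      simp only [LinearMap.comp_apply, LinearMap.snd_apply, Submodule.mkQ_apply,
        Submodule.Quotient.mk_eq_zero]
      exact hz.2
    set r : ((M × M) ⧸ K') →ₗ[R] M ⧸ K :=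
      Submodule.liftQ K' (K.mkQ ∘ₗ LinearMap.snd R M M) hr0 with hrdef
    have hemk : ∀ y : M, e (K.mkQ y) = K'.mkQ (0, y) := fun y => rfl
    have hrmk : ∀ z : M × M, r (K'.mkQ z) = K.mkQ z.2 := fun z => rfl
    have hre : ∀ c : M ⧸ K, r (e c) = c := by
      intro c
      obtain ⟨y, rfl⟩ := K.mkQ_surjective c
      rw [hemk, hrmk]
    set F : (M × M) →ₗ[R] (M × M) ⧸ K' :=
      K'.mkQ + e ∘ₗ f ∘ₗ LinearMap.fst R M M with hFdef
    have hFepi : IsUSEpi S F := by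
      refine ⟨1, hS.1, ?_⟩
      intro c
      obtain ⟨z, rfl⟩ := K'.mkQ_surjective c
      obtain ⟨w, hw⟩ := K.mkQ_surjective (f z.1)
      refine ⟨(z.1, z.2 - w), ?_⟩
      simp only [hFdef, LinearMap.add_apply, LinearMap.comp_apply, LinearMap.fst_apply]
      rw [← hw, hemk, one_smul, ← map_add]
      congr 1
      ext <;> simp
    obtain ⟨g, hg⟩ := hlift F hFepi
    refine ⟨LinearMap.snd R M M ∘ₗ g ∘ₗ LinearMap.inl R M M, ?_⟩
    ext x
    have hx := LinearMap.congr_fun hg (x, 0)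
    simp only [LinearMap.smul_apply, LinearMap.comp_apply, hFdef, LinearMap.add_apply,
      LinearMap.fst_apply, Submodule.mkQ_apply] at hx
    have hx' := congrArg r hx
    rw [map_smul, map_add, ← Submodule.mkQ_apply, ← Submodule.mkQ_apply, hrmk, hrmk,
      hre] at hx'
    simp only [map_zero, zero_add] at hx'
    simpa using hx'
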